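/- Let {a_i}_{i=1}^d and {b_j}_{j=1}^d be mutually unbiased orthonormal bases of ℂ^d, and let A = {|a_i⟩⟨a_i|} and B = {|b_j⟩⟨b_j|} be the corresponding non-degenerate projective observables. Then q^{A→B}_ρ(j) = 1/d for every density matrix ρ and every j, and Q_1(A→B) = 1 − 1/d, the supremum being attained at ρ = |b_1⟩⟨b_1|. -/

import Mathlib

open scoped BigOperators ComplexOrder
open Matrix

noncomputable section

/-- A projective observable: a finite family of mutually orthogonal
self-adjoint idempotents summing to the identity. -/
def IsProjObs {d r : ℕ} (P : Fin r → Matrix (Fin d) (Fin d) ℂ) : Prop :=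
  (∀ i, (P i).IsHermitian) ∧ (∀ i, P i * P i = P i) ∧
    (∀ i k, i ≠ k → P i * P k = 0) ∧ (∑ i, P i = 1)

/-- A density matrix: positive semidefinite with unit trace. -/
def IsDensity {d : ℕ} (ρ : Matrix (Fin d) (Fin d) ℂ) : Prop :=
  ρ.PosSemidef ∧ ρ.trace = 1

/-- The measurement channel `E^A(ρ) = Σ_i P_i ρ P_i` of a projective observable. -/
def measChannel {d r : ℕ} (P : Fin r → Matrix (Fin d) (Fin d) ℂ)
    (ρ : Matrix (Fin d) (Fin d) ℂ) : Matrix (Fin d) (Fin d) ℂ :=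
  ∑ i, P i * ρ * P i

/-- `p^B_ρ(j) = tr(P^B_j ρ)`. -/
def probB {d rB : ℕ} (Q : Fin rB → Matrix (Fin d) (Fin d) ℂ)
    (ρ : Matrix (Fin d) (Fin d) ℂ) (j : Fin rB) : ℝ :=
  ((Q j * ρ).trace).re

/-- `q^{A→B}_ρ(j) = tr(P^B_j Σ_i P^A_i ρ P^A_i)`. -/
def probAB {d rA rB : ℕ} (P : Fin rA → Matrix (Fin d) (Fin d) ℂ)
    (Q : Fin rB → Matrix (Fin d) (Fin d) ℂ)
    (ρ : Matrix (Fin d) (Fin d) ℂ) (j : Fin rB) : ℝ :=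
  ((Q j * measChannel P ρ).trace).re

open Classical in
/-- The positive semidefinite square root of a PSD matrix (junk value `0` otherwise). -/
noncomputable def msqrt {d : ℕ} (A : Matrix (Fin d) (Fin d) ℂ) :
    Matrix (Fin d) (Fin d) ℂ :=
  if h : A.PosSemidef then
    h.1.eigenvectorUnitary.1 * diagonal ((↑) ∘ (Real.sqrt ·) ∘ h.1.eigenvalues) *
      (star h.1.eigenvectorUnitary : Matrix (Fin d) (Fin d) ℂ)
  else 0

/-- `|X| = √(Xᴴ X)`, the positive semidefinite absolute value of a matrix. -/
noncomputable def matAbs {d : ℕ} (X : Matrix (Fin d) (Fin d) ℂ) :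
    Matrix (Fin d) (Fin d) ℂ :=
  msqrt (Xᴴ * X)

/-- The quantum fidelity `F(ρ,σ) = tr √(√ρ σ √ρ)`. -/
noncomputable def qFid {d : ℕ} (ρ σ : Matrix (Fin d) (Fin d) ℂ) : ℝ :=
  ((msqrt (msqrt ρ * σ * msqrt ρ)).trace).re

/-- Variational distance `D_1(p,q) = (1/2) Σ_j |p_j − q_j|`. -/
def distL1 {rB : ℕ} (p q : Fin rB → ℝ) : ℝ := (1 / 2) * ∑ j, |p j - q j|

/-- Chebyshev distance `D_∞(p,q) = max_j |p_j − q_j|`. -/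
noncomputable def distLinf {rB : ℕ} (p q : Fin rB → ℝ) : ℝ := ⨆ j, |p j - q j|

/-- Classical fidelity `F(p,q) = Σ_j √(p_j q_j)`. -/
noncomputable def classFid {rB : ℕ} (p q : Fin rB → ℝ) : ℝ :=
  ∑ j, Real.sqrt (p j * q j)

/-- `Q_1(A→B)`. -/
noncomputable def Q1 {d rA rB : ℕ} (P : Fin rA → Matrix (Fin d) (Fin d) ℂ)
    (Q : Fin rB → Matrix (Fin d) (Fin d) ℂ) : ℝ :=
  sSup {x : ℝ | ∃ ρ, IsDensity ρ ∧ x = distL1 (probAB P Q ρ) (probB Q ρ)}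

/-- `Q_∞(A→B)`. -/
noncomputable def Qinf {d rA rB : ℕ} (P : Fin rA → Matrix (Fin d) (Fin d) ℂ)
    (Q : Fin rB → Matrix (Fin d) (Fin d) ℂ) : ℝ :=
  sSup {x : ℝ | ∃ ρ, IsDensity ρ ∧ x = distLinf (probAB P Q ρ) (probB Q ρ)}

/-- `Q_F(A→B)`. -/
noncomputable def QF {d rA rB : ℕ} (P : Fin rA → Matrix (Fin d) (Fin d) ℂ)
    (Q : Fin rB → Matrix (Fin d) (Fin d) ℂ) : ℝ :=
  sSup {x : ℝ | ∃ ρ, IsDensity ρ ∧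
    x = 1 - (classFid (probAB P Q ρ) (probB Q ρ)) ^ 2}

/-- The rank-one projection `|v⟩⟨v|` onto a (unit) vector `v`. -/
def proj {d : ℕ} (v : Fin d → ℂ) : Matrix (Fin d) (Fin d) ℂ :=
  Matrix.vecMulVec v (star v)


namespace Aux12
variable {d : ℕ}

lemma vmv_mul (v w x y : Fin d → ℂ) :
    vecMulVec v w * vecMulVec x y = (w ⬝ᵥ x) • vecMulVec v y := by
  ext p q
  simp only [Matrix.mul_apply, vecMulVec_apply, Matrix.smul_apply, dotProduct,
    Finset.sum_mul, smul_eq_mul]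
  exact Finset.sum_congr rfl fun k _ => by ring

lemma trace_mul_vmv (M : Matrix (Fin d) (Fin d) ℂ) (v w : Fin d → ℂ) :
    (M * vecMulVec v w).trace = w ⬝ᵥ (M *ᵥ v) := by
  simp only [Matrix.trace, Matrix.diag, Matrix.mul_apply, vecMulVec_apply, dotProduct,
    Matrix.mulVec, Finset.mul_sum]
  exact Finset.sum_congr rfl fun p _ => Finset.sum_congr rfl fun k _ => by ring

lemma trace_vmv (v w : Fin d → ℂ) : (vecMulVec v w).trace = w ⬝ᵥ v := by
  simp only [Matrix.trace, Matrix.diag, vecMulVec_apply, dotProduct]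
  exact Finset.sum_congr rfl fun p _ => by ring

lemma proj_posSemidef (v : Fin d → ℂ) : (proj v).PosSemidef := by
  have h : proj v = replicateCol Unit v * (replicateCol Unit v)ᴴ := by
    rw [conjTranspose_replicateCol, proj, vecMulVec_eq Unit]
  rw [h]
  exact posSemidef_self_mul_conjTranspose _

lemma trace_proj (v : Fin d → ℂ) : (proj v).trace = star v ⬝ᵥ v := by
  rw [proj, trace_vmv]

lemma trace_proj_mul_proj (u v : Fin d → ℂ) :
    (proj u * proj v).trace = (star u ⬝ᵥ v) * (star v ⬝ᵥ u) := by
  rw [proj, proj, vmv_mul, trace_smul, trace_vmv, smul_eq_mul]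

lemma sum_proj (v : Fin d → Fin d → ℂ)
    (hv : ∀ i j, star (v i) ⬝ᵥ v j = if i = j then 1 else 0) :
    ∑ i, proj (v i) = 1 := by
  set M : Matrix (Fin d) (Fin d) ℂ := Matrix.of (fun x i => v i x) with hM
  have h1 : Mᴴ * M = 1 := by
    ext i j
    have := hv i j
    simpa [Matrix.mul_apply, Matrix.conjTranspose_apply, dotProduct, hM,
      Matrix.one_apply] using this
  have h2 : M * Mᴴ = 1 := mul_eq_one_comm.mp h1
  have h3 : ∑ i, proj (v i) = M * Mᴴ := by
    ext x y
    simp only [Matrix.sum_apply, Matrix.mul_apply, Matrix.conjTranspose_apply, proj,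
      vecMulVec_apply, hM, Matrix.of_apply, Pi.star_apply, RingHom.id_apply]
  rw [h3, h2]

lemma trace_mul_proj (ρ : Matrix (Fin d) (Fin d) ℂ) (v : Fin d → ℂ) :
    (ρ * proj v).trace = star v ⬝ᵥ (ρ *ᵥ v) := by
  rw [proj, trace_mul_vmv]

lemma trace_key (u v : Fin d → ℂ) (ρ : Matrix (Fin d) (Fin d) ℂ) :
    (proj u * (proj v * ρ * proj v)).trace
      = (star u ⬝ᵥ v) * ((star v ⬝ᵥ u) * (proj v * ρ).trace) := by
  have assoc : proj u * (proj v * ρ * proj v) = ((proj u * proj v) * ρ) * proj v := by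
    simp only [mul_assoc]
  rw [assoc, proj, proj, vmv_mul, smul_mul_assoc, smul_mul_assoc, trace_smul, smul_eq_mul]
  congr 1
  rw [Matrix.trace_mul_comm, ← mul_assoc, vmv_mul, smul_mul_assoc, trace_smul, smul_eq_mul]

lemma half_sum_abs_le (hd : 0 < d) (p : Fin d → ℝ) (hp0 : ∀ j, 0 ≤ p j)
    (hps : ∑ j, p j = 1) : (1 / 2) * ∑ j, |1 / (d : ℝ) - p j| ≤ 1 - 1 / (d : ℝ) := by
  set c : ℝ := 1 / (d : ℝ) with hc
  have hd1 : (1 : ℝ) ≤ (d : ℝ) := by exact_mod_cast hd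
  have hc0 : 0 < c := by positivity
  have hc1 : c ≤ 1 := by
    rw [hc, div_le_one (by linarith)]; exact hd1
  have hcd : c * (d : ℝ) = 1 := by
    rw [hc]; field_simp
  have hp1 : ∀ j, p j ≤ 1 := by
    intro j
    calc p j ≤ ∑ i, p i := Finset.single_le_sum (fun i _ => hp0 i) (Finset.mem_univ j)
    _ = 1 := hps
  have key : ∀ j, |c - p j| ≤ p j * (1 - 2 * c) + c := by
    intro j
    rw [abs_le]
    constructor <;> nlinarith [hp0 j, hp1 j]
  have hsum : ∑ j, |c - p j| ≤ ∑ j, (p j * (1 - 2 * c) + c) :=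
    Finset.sum_le_sum fun j _ => key j
  have heq : ∑ j : Fin d, (p j * (1 - 2 * c) + c) = 2 * (1 - c) := by
    rw [Finset.sum_add_distrib, ← Finset.sum_mul, hps, Finset.sum_const, Finset.card_univ,
      Fintype.card_fin, nsmul_eq_mul]
    nlinarith [hcd]
  linarith

end Aux12

theorem stmt_12 {d : ℕ} (hd : 0 < d)
    (a b : Fin d → (Fin d → ℂ))
    (ha : ∀ i j, star (a i) ⬝ᵥ a j = if i = j then 1 else 0)
    (hb : ∀ i j, star (b i) ⬝ᵥ b j = if i = j then 1 else 0)
    (hmub : ∀ i j, Complex.normSq (star (a i) ⬝ᵥ b j) = 1 / (d : ℝ)) :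
    (∀ ρ : Matrix (Fin d) (Fin d) ℂ, IsDensity ρ →
        ∀ j, probAB (fun i => proj (a i)) (fun j => proj (b j)) ρ j = 1 / (d : ℝ)) ∧
      Q1 (fun i => proj (a i)) (fun j => proj (b j)) = 1 - 1 / (d : ℝ) ∧
      distL1 (probAB (fun i => proj (a i)) (fun j => proj (b j)) (proj (b ⟨0, hd⟩)))
          (probB (fun j => proj (b j)) (proj (b ⟨0, hd⟩)))
        = 1 - 1 / (d : ℝ) := by
  have hd1 : (1 : ℝ) ≤ (d : ℝ) := by exact_mod_cast hd
  have hdpos : (0 : ℝ) < (d : ℝ) := by exact_mod_cast hd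
  have hdne : (d : ℝ) ≠ 0 := ne_of_gt hdpos
  have hinv1 : 1 / (d : ℝ) ≤ 1 := by rw [div_le_one hdpos]; exact hd1
  have hsumA : ∑ i, proj (a i) = (1 : Matrix (Fin d) (Fin d) ℂ) := Aux12.sum_proj a ha
  have hsumB : ∑ j, proj (b j) = (1 : Matrix (Fin d) (Fin d) ℂ) := Aux12.sum_proj b hb
  set z0 : Fin d := ⟨0, hd⟩ with hz0
  have hq : ∀ ρ : Matrix (Fin d) (Fin d) ℂ, IsDensity ρ →
      ∀ j, probAB (fun i => proj (a i)) (fun j => proj (b j)) ρ j = 1 / (d : ℝ) := by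
    intro ρ hρ j
    have htr : ((proj (b j)) * (∑ i, proj (a i) * ρ * proj (a i))).trace
        = ((1 / (d : ℝ) : ℝ) : ℂ) := by
      rw [Finset.mul_sum, trace_sum]
      have hterm : ∀ i ∈ Finset.univ, (proj (b j) * (proj (a i) * ρ * proj (a i))).trace
          = ((1 / (d : ℝ) : ℝ) : ℂ) * (proj (a i) * ρ).trace := by
        intro i _
        rw [Aux12.trace_key (b j) (a i) ρ, ← mul_assoc]
        congr 1
        rw [Matrix.star_dotProduct, ← hmub i j, Complex.normSq_eq_conj_mul_self]
        rfl
      rw [Finset.sum_congr rfl hterm, ← Finset.mul_sum, ← trace_sum, ← Finset.sum_mul,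
        hsumA, one_mul, hρ.2, mul_one]
    simp only [probAB, measChannel]
    rw [htr, Complex.ofReal_re]
  have hρ0 : IsDensity (proj (b z0)) := by
    refine ⟨Aux12.proj_posSemidef _, ?_⟩
    rw [Aux12.trace_proj, hb]
    simp
  have hp0 : ∀ j, probB (fun j => proj (b j)) (proj (b z0)) j
      = if j = z0 then (1 : ℝ) else 0 := by
    intro j
    simp only [probB]
    rw [Aux12.trace_proj_mul_proj, hb, hb]
    by_cases h : j = z0
    · simp [h]
    · simp [h, Ne.symm h]
  have hD : distL1 (probAB (fun i => proj (a i)) (fun j => proj (b j)) (proj (b z0)))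
      (probB (fun j => proj (b j)) (proj (b z0))) = 1 - 1 / (d : ℝ) := by
    unfold distL1
    have habs : ∀ j, |probAB (fun i => proj (a i)) (fun j => proj (b j)) (proj (b z0)) j
        - probB (fun j => proj (b j)) (proj (b z0)) j|
        = if j = z0 then 1 - 1 / (d : ℝ) else 1 / (d : ℝ) := by
      intro j
      rw [hq _ hρ0 j, hp0 j]
      by_cases h : j = z0
      · rw [if_pos h, if_pos h, abs_of_nonpos (by linarith)]
        ring
      · rw [if_neg h, if_neg h, sub_zero, abs_of_nonneg (by positivity)]
    rw [Finset.sum_congr rfl fun j _ => habs j]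
    have hstep : ∀ j : Fin d, (if j = z0 then 1 - 1 / (d : ℝ) else 1 / (d : ℝ))
        = 1 / (d : ℝ) + (if j = z0 then (1 - 2 / (d : ℝ)) else 0) := by
      intro j; split <;> ring
    rw [Finset.sum_congr rfl fun j _ => hstep j, Finset.sum_add_distrib,
      Finset.sum_ite_eq' Finset.univ z0 (fun _ => 1 - 2 / (d : ℝ)),
      if_pos (Finset.mem_univ _), Finset.sum_const, Finset.card_univ, Fintype.card_fin,
      nsmul_eq_mul]
    field_simp
    ring
  refine ⟨hq, ?_, hD⟩
  have hub : ∀ x ∈ {x : ℝ | ∃ ρ, IsDensity ρ ∧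
      x = distL1 (probAB (fun i => proj (a i)) (fun j => proj (b j)) ρ)
        (probB (fun j => proj (b j)) ρ)}, x ≤ 1 - 1 / (d : ℝ) := by
    rintro x ⟨ρ, hρ, rfl⟩
    have hq' := hq ρ hρ
    have hpnn : ∀ j, 0 ≤ probB (fun j => proj (b j)) ρ j := by
      intro j
      simp only [probB]
      rw [Matrix.trace_mul_comm, Aux12.trace_mul_proj]
      have h0 := hρ.1.dotProduct_mulVec_nonneg (b j)
      have := (Complex.le_def.mp h0).1
      simpa using this
    have hsum1 : ∑ j, probB (fun j => proj (b j)) ρ j = 1 := by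
      simp only [probB]
      rw [← Complex.re_sum, ← trace_sum, ← Finset.sum_mul, hsumB, one_mul, hρ.2,
        Complex.one_re]
    have hle := Aux12.half_sum_abs_le hd _ hpnn hsum1
    unfold distL1
    calc (1 / 2) * ∑ j, |probAB (fun i => proj (a i)) (fun j => proj (b j)) ρ j
          - probB (fun j => proj (b j)) ρ j|
        = (1 / 2) * ∑ j, |1 / (d : ℝ) - probB (fun j => proj (b j)) ρ j| := by
          rw [Finset.sum_congr rfl fun j _ => by rw [hq' j]]
      _ ≤ 1 - 1 / (d : ℝ) := hle
  have hmem : (1 - 1 / (d : ℝ)) ∈ {x : ℝ | ∃ ρ, IsDensity ρ ∧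
      x = distL1 (probAB (fun i => proj (a i)) (fun j => proj (b j)) ρ)
        (probB (fun j => proj (b j)) ρ)} := ⟨proj (b z0), hρ0, hD.symm⟩
  rw [Q1]
  exact le_antisymm (csSup_le ⟨_, hmem⟩ hub) (le_csSup ⟨_, hub⟩ hmem)


end
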